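/- The free groupoid on the category D with two objects 0, 1 and two parallel non-identity morphisms a, b : 0 → 1 has automorphism group of the object 0 isomorphic to the free group on one generator ℤ. -/

import Mathlib

open CategoryTheory

/-- The quiver with two vertices `false`, `true` and two parallel edges `false ⇉ true`. -/
instance : Quiver Bool :=
  ⟨fun a b => match a, b with
    | false, true => Fin 2
    | _, _ => Empty⟩

/-- The category `D` freely generated by two parallel arrows `a, b : 0 → 1`. -/
abbrev TwoParallelArrows : Type := CategoryTheory.Paths Bool

namespace AutFreeAux

open CategoryTheory.Localization.Construction

noncomputable section

abbrev M := Multiplicative ℤ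

abbrev Wtop : MorphismProperty TwoParallelArrows := ⊤

/-- edge `a` -/
def ea : (false : Bool) ⟶ (true : Bool) := (0 : Fin 2)

/-- edge `b` -/
def eb : (false : Bool) ⟶ (true : Bool) := (1 : Fin 2)

lemma edge_eq (q : (false : Bool) ⟶ (true : Bool)) : q = ea ∨ q = eb := by
  have h : (show Fin 2 from q) = 0 ∨ (show Fin 2 from q) = 1 := by omega
  exact h

/-- path `a` -/
def pa : (show TwoParallelArrows from false) ⟶ (show TwoParallelArrows from true) :=
  ea.toPath

/-- path `b` -/
def pb : (show TwoParallelArrows from false) ⟶ (show TwoParallelArrows from true) :=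
  eb.toPath

/-- the prefunctor sending `a ↦ ofAdd 1`, `b ↦ 1` -/
def φq : Prefunctor Bool (SingleObj M) where
  obj _ := SingleObj.star M
  map {X Y} e :=
    match X, Y, e with
    | false, true, e =>
      (if (show Fin 2 from e) = 0 then Multiplicative.ofAdd (1 : ℤ) else (1 : M) : M)

def φ : TwoParallelArrows ⥤ SingleObj M := Paths.lift φq

lemma φ_inverts : Wtop.IsInvertedBy φ := fun _ _ _ _ => inferInstance

/-- the functor from the localization to `SingleObj M` -/
def F : Wtop.Localization ⥤ SingleObj M := lift φ φ_inverts

lemma F_map {X Y : TwoParallelArrows} (f : X ⟶ Y) : F.map (Wtop.Q.map f) = φ.map f := by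
  have := Functor.congr_hom (fac φ φ_inverts) f
  simp at this
  exact this

/-- the generating automorphism `b⁻¹ ∘ a` of `Q.obj false` -/
def x : Aut (Wtop.Q.obj (show TwoParallelArrows from false)) :=
  (wIso pa trivial) ≪≫ (wIso pb trivial).symm

/-- the monoid hom `M →* End (Q.obj false)`, `n ↦ x ^ n` -/
def ψ : M →* CategoryTheory.End (Wtop.Q.obj (show TwoParallelArrows from false)) :=
  (Aut.toEnd _).comp (zpowersHom _ x)

/-- the functor `SingleObj M ⥤ localization` -/
def G : SingleObj M ⥤ Wtop.Localization := SingleObj.functor ψ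

/-- `Aut star ≃* M` -/
def θ : Aut (SingleObj.star M) ≃* M :=
  (((toUnits : M ≃* Mˣ)).trans (Units.toAut M)).symm

/-- the forward monoid hom -/
def Φ : Aut (Wtop.Q.obj (show TwoParallelArrows from false)) →* M :=
  θ.toMonoidHom.comp (Functor.mapAut _ F)

/-- the backward monoid hom -/
def Ψ : M →* Aut (Wtop.Q.obj (show TwoParallelArrows from false)) :=
  zpowersHom _ x

lemma Q_map_pa : Wtop.Q.map pa = (wIso pa trivial).hom := rfl
lemma Q_map_pb : Wtop.Q.map pb = (wIso pb trivial).hom := rfl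

lemma φ_map_pa : φ.map pa = (Multiplicative.ofAdd 1 : M) := by
  rw [φ, pa, Paths.lift_toPath]
  rfl

lemma φ_map_pb : φ.map pb = (1 : M) := by
  rw [φ, pb, Paths.lift_toPath]
  rfl

lemma θ_symm_hom (m : M) : (θ.symm m).hom = m := rfl

lemma F_mapAut_x : (Functor.mapAut _ F) x = θ.symm (Multiplicative.ofAdd 1) := by
  apply Iso.ext
  show F.map x.hom = (θ.symm (Multiplicative.ofAdd 1)).hom
  have h1 : F.map x.hom = F.map ((wIso pa trivial).hom) ≫ F.map ((wIso pb trivial).inv) := by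
    simp [x]
  have ha : F.map ((wIso pa trivial).hom) = φ.map pa := by rw [← Q_map_pa, F_map]
  have hb : F.map ((wIso pb trivial).hom) = φ.map pb := by rw [← Q_map_pb, F_map]
  have hbinv : F.map ((wIso pb trivial).hom) ≫ F.map ((wIso pb trivial).inv) = 𝟙 _ := by
    rw [← F.map_comp, Iso.hom_inv_id, F.map_id]
  rw [hb, φ_map_pb] at hbinv
  have hinv1 : (show M from F.map ((wIso pb trivial).inv)) = 1 := by
    have h := hbinv
    change (show M from F.map ((wIso pb trivial).inv)) * (1 : M) = (1 : M) at h
    rwa [mul_one] at h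
  rw [h1, ha, φ_map_pa]
  change (show M from F.map ((wIso pb trivial).inv)) * (Multiplicative.ofAdd (1 : ℤ) : M)
    = (Multiplicative.ofAdd (1 : ℤ) : M)
  rw [hinv1, one_mul]

lemma Φ_x : Φ x = Multiplicative.ofAdd 1 := by
  show θ ((Functor.mapAut _ F) x) = _
  rw [F_mapAut_x, MulEquiv.apply_symm_apply]

lemma Φ_Ψ (n : M) : Φ (Ψ n) = n := by
  show Φ (x ^ n.toAdd) = n
  rw [map_zpow, Φ_x, ← ofAdd_zsmul, smul_eq_mul, mul_one, ofAdd_toAdd]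

/-- components of the natural transformation `Q ⟶ Q ⋙ F ⋙ G` -/
def τapp : ∀ Z : TwoParallelArrows, ((Wtop.Q ⋙ 𝟭 _).obj Z ⟶ (Wtop.Q ⋙ (F ⋙ G)).obj Z)
  | false => 𝟙 _
  | true => (wIso pb trivial).inv

lemma edge_nat : ∀ {v w : Bool} (q : v ⟶ w),
    Wtop.Q.map ((Paths.of Bool).map q) ≫ τapp w
      = τapp v ≫ (F ⋙ G).map (Wtop.Q.map ((Paths.of Bool).map q)) := by
  intro v w q
  cases v <;> cases w
  · exact q.elim
  case false.true =>
    rcases edge_eq q with rfl | rfl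
    · show Wtop.Q.map pa ≫ (wIso pb trivial).inv
        = 𝟙 (Wtop.Q.obj (show TwoParallelArrows from false)) ≫ G.map (F.map (Wtop.Q.map pa))
      have hψ : G.map (F.map (Wtop.Q.map pa)) = (Aut.toEnd _) (x ^ (1 : ℤ)) := by
        rw [F_map, show φ.map pa = (Multiplicative.ofAdd 1 : M) from φ_map_pa]
        rfl
      erw [Category.id_comp, hψ, zpow_one]
      show (wIso pa trivial).hom ≫ (wIso pb trivial).inv = x.hom
      rfl
    · show Wtop.Q.map pb ≫ (wIso pb trivial).inv
        = 𝟙 (Wtop.Q.obj (show TwoParallelArrows from false)) ≫ G.map (F.map (Wtop.Q.map pb))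
      have hψ : G.map (F.map (Wtop.Q.map pb)) = (Aut.toEnd _) (x ^ (0 : ℤ)) := by
        rw [F_map, show φ.map pb = (1 : M) from φ_map_pb]
        rfl
      erw [Category.id_comp, hψ, zpow_zero]
      show (wIso pb trivial).hom ≫ (wIso pb trivial).inv = (Aut.toEnd _) (1 : Aut _)
      rw [Iso.hom_inv_id]
      rfl
  · exact q.elim
  · exact q.elim

/-- the natural transformation `Q ⟶ Q ⋙ F ⋙ G` -/
def τ : Wtop.Q ⋙ 𝟭 _ ⟶ Wtop.Q ⋙ (F ⋙ G) where
  app := τapp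
  naturality := by
    intro X Y p
    refine Paths.induction
      (P := fun {a b} f => Wtop.Q.map f ≫ τapp b = τapp a ≫ (F ⋙ G).map (Wtop.Q.map f))
      ?_ ?_ p
    · intro v
      show Wtop.Q.map (𝟙 _) ≫ _ = _ ≫ (F ⋙ G).map (Wtop.Q.map (𝟙 _))
      simp
    · intro u v w p q ih
      erw [Functor.map_comp, Functor.map_comp, Category.assoc,
        edge_nat q, ← Category.assoc, ih, Category.assoc]

/-- extension to the localization -/
def η : 𝟭 Wtop.Localization ⟶ F ⋙ G := natTransExtension τ

lemma Ψ_Φ (α : Aut (Wtop.Q.obj (show TwoParallelArrows from false))) : Ψ (Φ α) = α := by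
  apply Iso.ext
  have nat := η.naturality α.hom
  have happ : η.app (Wtop.Q.obj (show TwoParallelArrows from false))
      = τapp (show TwoParallelArrows from false) :=
    NatTransExtension.app_eq τ (show TwoParallelArrows from false)
  have htriv : τapp (show TwoParallelArrows from false)
      = 𝟙 (Wtop.Q.obj (show TwoParallelArrows from false)) := rfl
  rw [Functor.id_map, happ, htriv] at nat
  simp only [Functor.id_obj, Functor.comp_obj] at nat
  erw [Category.comp_id, Category.id_comp] at nat
  have hθ : F.map α.hom = (θ.symm (Φ α)).hom := by
    rw [show θ.symm (Φ α) = (Functor.mapAut _ F) α from θ.symm_apply_apply _]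
    rfl
  have hGF : (F ⋙ G).map α.hom = (x ^ (Φ α).toAdd).hom := by
    show G.map (F.map α.hom) = _
    rw [hθ]
    rfl
  rw [hGF] at nat
  show (x ^ (Φ α).toAdd).hom = α.hom
  rw [← nat]

end

end AutFreeAux

/-- The free groupoid on the category `D` with two objects `0`, `1` and two parallel
non-identity morphisms `a, b : 0 → 1` (i.e. the localization of `D` at all of its
morphisms) has automorphism group of the object `0` isomorphic to the free group on
one generator, i.e. to `ℤ`. -/
theorem aut_free_groupoid_twoParallelArrows :
    Nonempty
      (Aut ((⊤ : MorphismProperty TwoParallelArrows).Q.obj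
          (show TwoParallelArrows from false)) ≃* Multiplicative ℤ) := by
  exact ⟨{ toFun := AutFreeAux.Φ
           invFun := AutFreeAux.Ψ
           left_inv := AutFreeAux.Ψ_Φ
           right_inv := AutFreeAux.Φ_Ψ
           map_mul' := AutFreeAux.Φ.map_mul }⟩
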